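/- Let g be a norm on ℝ^d and θ, α unit vectors, and suppose θ is such that a supporting hyperplane direction H_{θ,0} exists with the angle between θ and H_{θ,0} at least arcsin(1/√d). Suppose the angle between H_{α,0} and H_{θ,0} is less than ε₁ and |α − θ| < ε₁ for a sufficiently small ε₁ > 0 (depending only on g and d). Let x be in direction α, and let Z ∈ ℝ^d with Φ_θ(Z) ≤ −r for some r > 0 (i.e. Z lies at least g-distance r on the negative side of H_{θ,0}, measured via the longitudinal projection), and assume g(Z) < 2g(x) and Φ_θ(x) ≥ g(x)/2. Then g(Z) + g(x − Z) − g(x) ≥ (1/2)(r + g(Z)). -/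

import Mathlib

open Finset in
lemma g_sum_le {E : Type*} [AddCommMonoid E] (g : E → ℝ) (hg00 : g 0 = 0)
    (hgadd : ∀ u v, g (u + v) ≤ g u + g v) {ι : Type*} (s : Finset ι) (f : ι → E) :
    g (∑ i ∈ s, f i) ≤ ∑ i ∈ s, g (f i) := by
  classical
  induction s using Finset.cons_induction with
  | empty => simp [hg00]
  | cons a s ha ih =>
      rw [Finset.sum_cons, Finset.sum_cons]
      exact (hgadd _ _).trans (by linarith)

lemma g_upper {d : ℕ} (g : EuclideanSpace ℝ (Fin d) → ℝ)
    (hg0 : ∀ u, 0 ≤ g u)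
    (hgadd : ∀ u v, g (u + v) ≤ g u + g v)
    (hgsmul : ∀ (t : ℝ) u, g (t • u) = |t| * g u) :
    ∃ M : ℝ, 0 < M ∧ ∀ u, g u ≤ M * ‖u‖ := by
  have hg00 : g 0 = 0 := by simpa using hgsmul 0 0
  have hpos : (0:ℝ) < (∑ i : Fin d, g (EuclideanSpace.single i 1)) + 1 := by
    have := Finset.sum_nonneg (fun i (_ : i ∈ (Finset.univ : Finset (Fin d))) => hg0 (EuclideanSpace.single i (1:ℝ)))
    linarith
  refine ⟨(∑ i : Fin d, g (EuclideanSpace.single i 1)) + 1, hpos, fun u => ?_⟩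
  have hu : u = ∑ i : Fin d, (u i) • EuclideanSpace.single i (1:ℝ) := by
    have := (EuclideanSpace.basisFun (Fin d) ℝ).sum_repr u
    simp only [EuclideanSpace.basisFun_repr, EuclideanSpace.basisFun_apply] at this
    exact this.symm
  calc g u = g (∑ i : Fin d, (u i) • EuclideanSpace.single i (1:ℝ)) := by rw [← hu]
    _ ≤ ∑ i : Fin d, g ((u i) • EuclideanSpace.single i (1:ℝ)) :=
        g_sum_le g hg00 hgadd _ _
    _ = ∑ i : Fin d, |u i| * g (EuclideanSpace.single i (1:ℝ)) := by
        simp [hgsmul]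
    _ ≤ ∑ i : Fin d, ‖u‖ * g (EuclideanSpace.single i (1:ℝ)) := by
        refine Finset.sum_le_sum fun i _ => ?_
        have h1 : |u i| ≤ ‖u‖ := by
          have := EuclideanSpace.norm_eq u
          have h2 : |u i| = Real.sqrt (|u i|^2) := by
            rw [Real.sqrt_sq_eq_abs, abs_abs]
          rw [h2, this]
          apply Real.sqrt_le_sqrt
          exact Finset.single_le_sum (f := fun i => ‖u i‖^2) (fun i _ => by positivity) (Finset.mem_univ i) |>.trans_eq' (by simp [Real.norm_eq_abs])
        exact mul_le_mul_of_nonneg_right h1 (hg0 _)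
    _ ≤ ((∑ i : Fin d, g (EuclideanSpace.single i 1)) + 1) * ‖u‖ := by
        rw [← Finset.mul_sum]
        nlinarith [norm_nonneg u, Finset.sum_nonneg (fun i (_ : i ∈ (Finset.univ : Finset (Fin d))) => hg0 (EuclideanSpace.single i (1:ℝ)))]

lemma g_lower {d : ℕ} (hd : 0 < d) (g : EuclideanSpace ℝ (Fin d) → ℝ)
    (hg0 : ∀ u, 0 ≤ g u)
    (hgadd : ∀ u v, g (u + v) ≤ g u + g v)
    (hgsmul : ∀ (t : ℝ) u, g (t • u) = |t| * g u)
    (hgdef : ∀ u, g u = 0 → u = 0) :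
    ∃ m : ℝ, 0 < m ∧ ∀ u, m * ‖u‖ ≤ g u := by
  obtain ⟨M, hM0, hM⟩ := g_upper g hg0 hgadd hgsmul
  have hgsub : ∀ u v, g u - g v ≤ g (u - v) := by
    intro u v
    have := hgadd (u - v) v
    simp at this
    linarith
  have hcont : Continuous g := by
    have : LipschitzWith ⟨M, hM0.le⟩ g := by
      apply LipschitzWith.of_dist_le_mul
      intro u v
      rw [Real.dist_eq, dist_eq_norm]
      show |g u - g v| ≤ M * ‖u - v‖
      rw [abs_sub_le_iff]
      constructor
      · exact (hgsub u v).trans (hM _)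
      · refine (hgsub v u).trans ((hM _).trans_eq ?_)
        rw [norm_sub_rev]
    exact this.continuous
  have hsne : (Metric.sphere (0 : EuclideanSpace ℝ (Fin d)) 1).Nonempty := by
    refine ⟨EuclideanSpace.single ⟨0, hd⟩ 1, ?_⟩
    simp [EuclideanSpace.norm_single]
  obtain ⟨u₀, hu₀s, hu₀⟩ := (isCompact_sphere (0 : EuclideanSpace ℝ (Fin d)) 1).exists_isMinOn hsne hcont.continuousOn
  have hu₀n : ‖u₀‖ = 1 := by simpa using hu₀s
  have hm0 : 0 < g u₀ := by
    rcases (hg0 u₀).lt_or_eq with h | h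
    · exact h
    · exfalso
      have := hgdef u₀ h.symm
      rw [this] at hu₀n; simp at hu₀n
  refine ⟨g u₀, hm0, fun u => ?_⟩
  rcases eq_or_ne u 0 with rfl | hu
  · simp [show g 0 = 0 by simpa using hgsmul 0 0]
  · have hun : 0 < ‖u‖ := norm_pos_iff.mpr hu
    have hmem : ‖u‖⁻¹ • u ∈ Metric.sphere (0 : EuclideanSpace ℝ (Fin d)) 1 := by
      simp [norm_smul, abs_of_pos (inv_pos.mpr hun), inv_mul_cancel₀ hun.ne']
    have h2 : g u₀ ≤ g (‖u‖⁻¹ • u) := hu₀ hmem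
    rw [hgsmul, abs_of_pos (inv_pos.mpr hun)] at h2
    calc g u₀ * ‖u‖ ≤ (‖u‖⁻¹ * g u) * ‖u‖ := by nlinarith
      _ = g u := by field_simp

/-- one-sided support bound: `⟪u, n⟫ ≤ c * g u` where `c = ⟪(g β)⁻¹ • β, n⟫`. -/
lemma support_le {d : ℕ} (g : EuclideanSpace ℝ (Fin d) → ℝ)
    (hg0 : ∀ u, 0 ≤ g u)
    (hgsmul : ∀ (t : ℝ) u, g (t • u) = |t| * g u)
    (hgdef : ∀ u, g u = 0 → u = 0)
    (β n : EuclideanSpace ℝ (Fin d)) (hgβ : 0 < g β)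
    (hs : ∀ u, g u ≤ 1 → (inner ℝ u n : ℝ) ≤ (inner ℝ ((g β)⁻¹ • β) n : ℝ)) :
    ∀ u, (inner ℝ u n : ℝ) ≤ (inner ℝ ((g β)⁻¹ • β) n : ℝ) * g u := by
  intro u
  rcases eq_or_ne u 0 with rfl | hu
  · have : g (0 : EuclideanSpace ℝ (Fin d)) = 0 := by simpa using hgsmul 0 0
    simp [this]
  · have hgu : 0 < g u := by
      rcases (hg0 u).lt_or_eq with h | h
      · exact h
      · exact absurd (hgdef u h.symm) hu
    have h1 : g ((g u)⁻¹ • u) ≤ 1 := by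
      rw [hgsmul, abs_of_pos (inv_pos.mpr hgu), inv_mul_cancel₀ hgu.ne']
    have h2 := hs _ h1
    rw [real_inner_smul_left] at h2
    have h3 := mul_le_mul_of_nonneg_left h2 hgu.le
    calc (inner ℝ u n : ℝ) = g u * ((g u)⁻¹ * (inner ℝ u n : ℝ)) := by field_simp
      _ ≤ g u * (inner ℝ ((g β)⁻¹ • β) n : ℝ) := h3
      _ = (inner ℝ ((g β)⁻¹ • β) n : ℝ) * g u := mul_comm _ _

set_option maxHeartbeats 1000000 in
/-- the Claim (2.18) in the proof of Lemma 2.2: for sufficiently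
small `ε₁ > 0` (depending only on the norm `g` and `d`), if a point `Z`
backtracks `g`-distance at least `r` behind the hyperplane `H_{θ,0}` (measured
via `Φ_θ(u) = ⟨u,n_θ⟩ / ⟨y_θ,n_θ⟩`), `g(Z) < 2 g(x)`, `Φ_θ(x) ≥ g(x)/2`, `x`
points in direction `α`, and the hyperplane/direction data for `α` and `θ` are
within `ε₁` of each other, then
`g(Z) + g(x - Z) - g(x) ≥ (1/2)(r + g(Z))`. -/
theorem backtrack_extra_distance {d : ℕ} (hd : 0 < d)
    (g : EuclideanSpace ℝ (Fin d) → ℝ)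
    (hg0 : ∀ u, 0 ≤ g u)
    (hgadd : ∀ u v, g (u + v) ≤ g u + g v)
    (hgsmul : ∀ (t : ℝ) u, g (t • u) = |t| * g u)
    (hgdef : ∀ u, g u = 0 → u = 0) :
    ∃ ε₁ : ℝ, 0 < ε₁ ∧
      ∀ (θ α nθ nα x Z : EuclideanSpace ℝ (Fin d)) (r : ℝ),
        ‖θ‖ = 1 → ‖α‖ = 1 → 0 < g θ → 0 < g α →
        ‖nθ‖ = 1 → ‖nα‖ = 1 →
        (∀ u, g u ≤ 1 → (inner ℝ u nθ : ℝ) ≤ (inner ℝ ((g θ)⁻¹ • θ) nθ : ℝ)) →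
        (∀ u, g u ≤ 1 → (inner ℝ u nα : ℝ) ≤ (inner ℝ ((g α)⁻¹ • α) nα : ℝ)) →
        1 / Real.sqrt d ≤ |(inner ℝ θ nθ : ℝ)| →
        Real.arccos |(inner ℝ nθ nα : ℝ)| < ε₁ →
        ‖α - θ‖ < ε₁ →
        (∃ t : ℝ, 0 < t ∧ x = t • α) →
        0 < r →
        (inner ℝ Z nθ : ℝ) / (inner ℝ ((g θ)⁻¹ • θ) nθ : ℝ) ≤ -r →
        g Z < 2 * g x →
        g x / 2 ≤ (inner ℝ x nθ : ℝ) / (inner ℝ ((g θ)⁻¹ • θ) nθ : ℝ) →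
        (1/2) * (r + g Z) ≤ g Z + g (x - Z) - g x := by
  obtain ⟨M, hM0, hM⟩ := g_upper g hg0 hgadd hgsmul
  obtain ⟨m, hm0, hm⟩ := g_lower hd g hg0 hgadd hgsmul hgdef
  have hg00 : g 0 = 0 := by simpa using hgsmul 0 0
  -- m ≤ M
  have hmM : m ≤ M := by
    have h1 : ‖(EuclideanSpace.single (⟨0, hd⟩ : Fin d) (1:ℝ))‖ = 1 := by
      simp [EuclideanSpace.norm_single]
    have h2 := hm (EuclideanSpace.single (⟨0, hd⟩ : Fin d) (1:ℝ))
    have h3 := hM (EuclideanSpace.single (⟨0, hd⟩ : Fin d) (1:ℝ))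
    rw [h1] at h2 h3
    linarith
  refine ⟨m / (4 * M), by positivity, ?_⟩
  set ε₁ := m / (4 * M) with hε₁def
  clear_value ε₁
  have hε₁0 : 0 < ε₁ := by rw [hε₁def]; positivity
  have hε₁le : ε₁ ≤ m / (2 * M) := by
    rw [hε₁def, div_le_div_iff₀ (by positivity) (by positivity)]
    nlinarith
  have hε₁half : ε₁ ≤ 1/2 := by
    rw [hε₁def, div_le_iff₀ (by positivity)]
    nlinarith
  intro θ α nθ nα x Z r hθn hαn hgθ hgα hnθn hnαn hsθ hsα hθnθ hang hαθ hx hr hΦZ hgZx hΦx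
  obtain ⟨t, ht, rfl⟩ := hx
  set cθ := (inner ℝ ((g θ)⁻¹ • θ) nθ : ℝ) with hcθdef
  set cα := (inner ℝ ((g α)⁻¹ • α) nα : ℝ) with hcαdef
  have hsupθ : ∀ u, (inner ℝ u nθ : ℝ) ≤ cθ * g u := by
    rw [hcθdef]; exact support_le g hg0 hgsmul hgdef θ nθ hgθ (by rw [← hcθdef]; exact hsθ)
  have hsupα : ∀ u, (inner ℝ u nα : ℝ) ≤ cα * g u := by
    rw [hcαdef]; exact support_le g hg0 hgsmul hgdef α nα hgα (by rw [← hcαdef]; exact hsα)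
  clear_value cθ cα
  have hgneg : ∀ u : EuclideanSpace ℝ (Fin d), g (-u) = g u := by
    intro u
    have := hgsmul (-1) u
    simpa using this
  have habsθ : ∀ u, |(inner ℝ u nθ : ℝ)| ≤ cθ * g u := by
    intro u
    rw [abs_le]
    refine ⟨?_, hsupθ u⟩
    have := hsupθ (-u)
    rw [inner_neg_left, hgneg] at this
    linarith
  have habsα : ∀ u, |(inner ℝ u nα : ℝ)| ≤ cα * g u := by
    intro u
    rw [abs_le]
    refine ⟨?_, hsupα u⟩
    have := hsupα (-u)
    rw [inner_neg_left, hgneg] at this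
    linarith
  -- lower bounds on cθ, cα
  have hgnθ : 0 < g nθ := by
    rcases (hg0 nθ).lt_or_eq with h | h
    · exact h
    · exfalso; have := hgdef nθ h.symm; rw [this] at hnθn; simp at hnθn
  have hgnα : 0 < g nα := by
    rcases (hg0 nα).lt_or_eq with h | h
    · exact h
    · exfalso; have := hgdef nα h.symm; rw [this] at hnαn; simp at hnαn
  have hcθlb : 1 / M ≤ cθ := by
    have h1 : g ((g nθ)⁻¹ • nθ) ≤ 1 := by
      rw [hgsmul, abs_of_pos (inv_pos.mpr hgnθ), inv_mul_cancel₀ hgnθ.ne']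
    have h2 := hsθ _ h1
    rw [real_inner_smul_left, real_inner_self_eq_norm_sq, hnθn] at h2
    have h3 : g nθ ≤ M := by have := hM nθ; rw [hnθn] at this; linarith
    have h4 : 1 / M ≤ (g nθ)⁻¹ := by
      rw [one_div, inv_le_inv₀ hM0 hgnθ] ; exact h3
    calc 1 / M ≤ (g nθ)⁻¹ := h4
      _ = (g nθ)⁻¹ * 1 ^ 2 := by ring
      _ ≤ cθ := h2
  have hcαlb : 1 / M ≤ cα := by
    have h1 : g ((g nα)⁻¹ • nα) ≤ 1 := by
      rw [hgsmul, abs_of_pos (inv_pos.mpr hgnα), inv_mul_cancel₀ hgnα.ne']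
    have h2 := hsα _ h1
    rw [real_inner_smul_left, real_inner_self_eq_norm_sq, hnαn] at h2
    have h3 : g nα ≤ M := by have := hM nα; rw [hnαn] at this; linarith
    have h4 : 1 / M ≤ (g nα)⁻¹ := by
      rw [one_div, inv_le_inv₀ hM0 hgnα] ; exact h3
    calc 1 / M ≤ (g nα)⁻¹ := h4
      _ = (g nα)⁻¹ * 1 ^ 2 := by ring
      _ ≤ cα := h2
  have hcθ0 : 0 < cθ := lt_of_lt_of_le (by positivity) hcθlb
  have hcα0 : 0 < cα := lt_of_lt_of_le (by positivity) hcαlb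
  -- g of normalized vectors is 1; norms of normalized vectors ≤ 1/m
  have hguθ : g ((g θ)⁻¹ • θ) = 1 := by
    rw [hgsmul, abs_of_pos (inv_pos.mpr hgθ), inv_mul_cancel₀ hgθ.ne']
  have hguα : g ((g α)⁻¹ • α) = 1 := by
    rw [hgsmul, abs_of_pos (inv_pos.mpr hgα), inv_mul_cancel₀ hgα.ne']
  have hnuθ : ‖(g θ)⁻¹ • θ‖ ≤ 1 / m := by
    have := hm ((g θ)⁻¹ • θ)
    rw [hguθ] at this
    rw [le_div_iff₀ hm0]
    linarith
  have hnuα : ‖(g α)⁻¹ • α‖ ≤ 1 / m := by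
    have := hm ((g α)⁻¹ • α)
    rw [hguα] at this
    rw [le_div_iff₀ hm0]
    linarith
  -- cθ ≤ 1/m, cα ≤ 1/m (not strictly needed but cheap)
  -- inner β nβ = cβ * g β
  have hinθ : (inner ℝ θ nθ : ℝ) = cθ * g θ := by
    rw [hcθdef, real_inner_smul_left]
    field_simp
  have hinα : (inner ℝ α nα : ℝ) = cα * g α := by
    rw [hcαdef, real_inner_smul_left]
    field_simp
  -- the inner product |⟪nθ, nα⟫| is > cos ε₁
  have hpabs : |(inner ℝ nθ nα : ℝ)| ≤ 1 := by
    have := abs_real_inner_le_norm nθ nα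
    rw [hnθn, hnαn] at this
    linarith
  have hcoslt : Real.cos ε₁ < |(inner ℝ nθ nα : ℝ)| := by
    have h1 : Real.cos (Real.arccos |(inner ℝ nθ nα : ℝ)|) = |(inner ℝ nθ nα : ℝ)| :=
      Real.cos_arccos (le_trans (by norm_num) (abs_nonneg _)) hpabs
    rw [← h1]
    have hεpi : ε₁ ≤ Real.pi := by linarith [Real.pi_gt_three, hε₁half]
    exact Real.cos_lt_cos_of_nonneg_of_le_pi (Real.arccos_nonneg _) hεpi hang
  have hcosge : 1 - ε₁^2/2 ≤ Real.cos ε₁ := Real.one_sub_sq_div_two_le_cos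
  -- rule out ⟪nθ, nα⟫ < 0, get ‖nα - nθ‖ ≤ ε₁
  have hnn : ‖nα - nθ‖ ≤ ε₁ := by
    rcases le_or_gt 0 (inner ℝ nθ nα : ℝ) with hp | hp
    · -- plus case
      have hp' : 1 - ε₁^2/2 < (inner ℝ nθ nα : ℝ) := by
        rw [abs_of_nonneg hp] at hcoslt
        linarith
      have hsq : ‖nα - nθ‖^2 = 2 - 2 * (inner ℝ nθ nα : ℝ) := by
        rw [norm_sub_sq_real, hnθn, hnαn, real_inner_comm]
        ring
      have h2 : ‖nα - nθ‖^2 ≤ ε₁^2 := by rw [hsq]; linarith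
      have h3 := Real.sqrt_le_sqrt h2
      rwa [Real.sqrt_sq (norm_nonneg _), Real.sqrt_sq hε₁0.le] at h3
    · -- minus case: contradiction
      exfalso
      have hp' : (inner ℝ nθ nα : ℝ) < -(1 - ε₁^2/2) := by
        rw [abs_of_neg hp] at hcoslt
        linarith
      have hsq : ‖nα + nθ‖^2 = 2 + 2 * (inner ℝ nθ nα : ℝ) := by
        rw [norm_add_sq_real, hnθn, hnαn, real_inner_comm]
        ring
      have h2 : ‖nα + nθ‖ ≤ ε₁ := by
        have h3 : ‖nα + nθ‖^2 ≤ ε₁^2 := by rw [hsq]; linarith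
        have h4 := Real.sqrt_le_sqrt h3
        rwa [Real.sqrt_sq (norm_nonneg _), Real.sqrt_sq hε₁0.le] at h4
      -- inner α nθ is large
      have hgθm : m ≤ g θ := by have := hm θ; rw [hθn] at this; linarith
      have hgαθ : g (θ - α) ≤ M * ε₁ := by
        have h4 : ‖θ - α‖ < ε₁ := by rw [norm_sub_rev]; exact hαθ
        calc g (θ - α) ≤ M * ‖θ - α‖ := hM _
          _ ≤ M * ε₁ := mul_le_mul_of_nonneg_left h4.le hM0.le
      have h5 : (inner ℝ α nθ : ℝ) = (inner ℝ θ nθ : ℝ) - (inner ℝ (θ - α) nθ : ℝ) := by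
        rw [inner_sub_left]; ring
      have h6 : (inner ℝ (θ - α) nθ : ℝ) ≤ cθ * (M * ε₁) := by
        calc (inner ℝ (θ - α) nθ : ℝ) ≤ cθ * g (θ - α) := hsupθ _
          _ ≤ cθ * (M * ε₁) := mul_le_mul_of_nonneg_left hgαθ hcθ0.le
      have hMε : M * ε₁ ≤ m / 2 := by
        have hq : M * ε₁ = m / 4 := by
          rw [hε₁def]; field_simp
        rw [hq]; linarith
      have h7 : cθ * (m / 2) ≤ (inner ℝ α nθ : ℝ) := by
        rw [h5, hinθ]
        have ha : cθ * m ≤ cθ * g θ := mul_le_mul_of_nonneg_left hgθm hcθ0.le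
        have hb : (inner ℝ (θ - α) nθ : ℝ) ≤ cθ * (m / 2) :=
          h6.trans (mul_le_mul_of_nonneg_left hMε hcθ0.le)
        have hc2 : cθ * m = 2 * (cθ * (m / 2)) := by ring
        linarith
      have h8 : m / (2 * M) ≤ (inner ℝ α nθ : ℝ) := by
        calc m / (2 * M) = (1 / M) * (m / 2) := by ring
          _ ≤ cθ * (m / 2) := mul_le_mul_of_nonneg_right hcθlb (by positivity)
          _ ≤ _ := h7
      -- but inner α nα positive and close to -inner α nθ
      have h9 : (inner ℝ α nα : ℝ) = (inner ℝ α (nα + nθ) : ℝ) - (inner ℝ α nθ : ℝ) := by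
        rw [inner_add_right]; ring
      have h10 : (inner ℝ α (nα + nθ) : ℝ) ≤ ε₁ := by
        calc (inner ℝ α (nα + nθ) : ℝ) ≤ ‖α‖ * ‖nα + nθ‖ := real_inner_le_norm _ _
          _ ≤ ε₁ := by rw [hαn]; linarith
      have h11 : m / M ≤ (inner ℝ α nα : ℝ) := by
        rw [hinα]
        have : m ≤ g α := by have := hm α; rw [hαn] at this; linarith
        calc m / M = (1/M) * m := by ring
          _ ≤ cα * g α := mul_le_mul hcαlb this hm0.le hcα0.le
      have h12 : ε₁ ≤ m / (2 * M) := hε₁le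
      have : (inner ℝ α nα : ℝ) ≤ ε₁ - m / (2 * M) := by rw [h9]; linarith
      have hmm : 0 < m / M := by positivity
      have hh : 0 < m / (2*M) := by positivity
      linarith
  -- |cα - cθ| ≤ ε₁ / m
  have hccdiff : |cθ - cα| ≤ ε₁ / m := by
    have h1 : cα ≤ cθ + ε₁ / m := by
      have h2 : (inner ℝ ((g α)⁻¹ • α) nα : ℝ) =
          (inner ℝ ((g α)⁻¹ • α) nθ : ℝ) + (inner ℝ ((g α)⁻¹ • α) (nα - nθ) : ℝ) := by
        rw [inner_sub_right]; ring
      have h3 : (inner ℝ ((g α)⁻¹ • α) nθ : ℝ) ≤ cθ := hsθ _ (le_of_eq hguα)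
      have h4 : (inner ℝ ((g α)⁻¹ • α) (nα - nθ) : ℝ) ≤ ε₁ / m := by
        calc (inner ℝ ((g α)⁻¹ • α) (nα - nθ) : ℝ) ≤ ‖(g α)⁻¹ • α‖ * ‖nα - nθ‖ :=
              real_inner_le_norm _ _
          _ ≤ (1/m) * ε₁ := by
              apply mul_le_mul hnuα hnn (norm_nonneg _) (by positivity)
          _ = ε₁ / m := by ring
      rw [hcαdef, h2]
      linarith
    have h5 : cθ ≤ cα + ε₁ / m := by
      have h2 : (inner ℝ ((g θ)⁻¹ • θ) nθ : ℝ) =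
          (inner ℝ ((g θ)⁻¹ • θ) nα : ℝ) + (inner ℝ ((g θ)⁻¹ • θ) (nθ - nα) : ℝ) := by
        rw [inner_sub_right]; ring
      have h3 : (inner ℝ ((g θ)⁻¹ • θ) nα : ℝ) ≤ cα := hsα _ (le_of_eq hguθ)
      have h4 : (inner ℝ ((g θ)⁻¹ • θ) (nθ - nα) : ℝ) ≤ ε₁ / m := by
        calc (inner ℝ ((g θ)⁻¹ • θ) (nθ - nα) : ℝ) ≤ ‖(g θ)⁻¹ • θ‖ * ‖nθ - nα‖ :=
              real_inner_le_norm _ _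
          _ ≤ (1/m) * ε₁ := by
              rw [norm_sub_rev]
              apply mul_le_mul hnuθ hnn (norm_nonneg _) (by positivity)
          _ = ε₁ / m := by ring
      rw [hcθdef, h2]
      linarith
    rw [abs_le]
    constructor <;> linarith
  -- key estimate: the two linear functionals are uniformly close
  have key : ∀ u, |(inner ℝ u nα : ℝ) / cα - (inner ℝ u nθ : ℝ) / cθ| ≤ g u / 2 := by
    intro u
    set a := (inner ℝ u nα : ℝ)
    set b := (inner ℝ u nθ : ℝ)
    have hab : |a - b| ≤ g u / m * ε₁ := by
      have h1 : a - b = (inner ℝ u (nα - nθ) : ℝ) := by rw [inner_sub_right]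
      rw [h1]
      calc |(inner ℝ u (nα - nθ) : ℝ)| ≤ ‖u‖ * ‖nα - nθ‖ := abs_real_inner_le_norm _ _
        _ ≤ (g u / m) * ε₁ := by
            apply mul_le_mul _ hnn (norm_nonneg _) (div_nonneg (hg0 u) hm0.le)
            rw [le_div_iff₀ hm0]
            linarith [hm u]
    have hbb : |b| ≤ cθ * g u := habsθ u
    have heq : a / cα - b / cθ = (a * cθ - cα * b) / (cα * cθ) :=
      div_sub_div a b hcα0.ne' hcθ0.ne'
    rw [heq, abs_div, abs_of_pos (by positivity : (0:ℝ) < cα * cθ), div_le_iff₀ (by positivity)]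
    have hsplit : |a * cθ - cα * b| ≤ |a - b| * cθ + |b| * |cθ - cα| := by
      have h1 : a * cθ - cα * b = (a - b) * cθ + b * (cθ - cα) := by ring
      rw [h1]
      calc |(a - b) * cθ + b * (cθ - cα)| ≤ |(a - b) * cθ| + |b * (cθ - cα)| := abs_add_le _ _
        _ = |a - b| * cθ + |b| * |cθ - cα| := by
            rw [abs_mul, abs_mul, abs_of_pos hcθ0]
    have h2 : |a - b| * cθ ≤ (g u / m * ε₁) * cθ :=
      mul_le_mul_of_nonneg_right hab hcθ0.le
    have h3 : |b| * |cθ - cα| ≤ (cθ * g u) * (ε₁ / m) :=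
      mul_le_mul hbb hccdiff (abs_nonneg _) (mul_nonneg hcθ0.le (hg0 u))
    have h4 : |a * cθ - cα * b| ≤ 2 * cθ * g u * ε₁ / m := by
      calc |a * cθ - cα * b| ≤ |a - b| * cθ + |b| * |cθ - cα| := hsplit
        _ ≤ (g u / m * ε₁) * cθ + (cθ * g u) * (ε₁ / m) := by linarith
        _ = 2 * cθ * g u * ε₁ / m := by ring
    have h5 : 2 * cθ * g u * ε₁ / m = cθ * g u / (2 * M) := by
      rw [hε₁def]
      field_simp
      ring
    have h6 : cθ * g u / (2 * M) ≤ g u / 2 * (cα * cθ) := by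
      rw [div_le_iff₀ (by positivity)]
      have hone : 1 ≤ cα * M := by
        have h8 := mul_le_mul_of_nonneg_right hcαlb hM0.le
        rwa [one_div, inv_mul_cancel₀ hM0.ne'] at h8
      have h7 : cθ * g u * 1 ≤ cθ * g u * (cα * M) :=
        mul_le_mul_of_nonneg_left hone (mul_nonneg hcθ0.le (hg0 u))
      calc cθ * g u = cθ * g u * 1 := by ring
        _ ≤ cθ * g u * (cα * M) := h7
        _ = g u / 2 * (cα * cθ) * (2 * M) := by ring
    linarith
  -- finish
  have hgx : g (t • α) = t * g α := by rw [hgsmul, abs_of_pos ht]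
  have hΨx : (inner ℝ (t • α) nα : ℝ) = cα * g (t • α) := by
    rw [real_inner_smul_left, hinα, hgx]
    ring
  -- Ψ Z ≤ -r + g Z / 2
  have hΨZ : (inner ℝ Z nα : ℝ) / cα ≤ -r + g Z / 2 := by
    have h1 := key Z
    rw [abs_le] at h1
    linarith [h1.2, hΦZ]
  have hΨZ' : (inner ℝ Z nα : ℝ) ≤ cα * (-r + g Z / 2) := by
    rw [div_le_iff₀ hcα0] at hΨZ
    linarith [hΨZ]
  -- g (x - Z) ≥ g x + r - g Z / 2
  have hxZ : (inner ℝ (t • α - Z) nα : ℝ) ≤ cα * g (t • α - Z) := hsupα _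
  have h8 : (inner ℝ (t • α - Z) nα : ℝ) = (inner ℝ (t • α) nα : ℝ) - (inner ℝ Z nα : ℝ) := by
    rw [inner_sub_left]
  have h9 : cα * g (t • α) - cα * (-r + g Z / 2) ≤ cα * g (t • α - Z) := by
    calc cα * g (t • α) - cα * (-r + g Z / 2)
        = (inner ℝ (t • α) nα : ℝ) - cα * (-r + g Z / 2) := by rw [hΨx]
      _ ≤ (inner ℝ (t • α) nα : ℝ) - (inner ℝ Z nα : ℝ) := by linarith
      _ = (inner ℝ (t • α - Z) nα : ℝ) := h8.symm
      _ ≤ cα * g (t • α - Z) := hxZ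
  have h10 : g (t • α) + r - g Z / 2 ≤ g (t • α - Z) := by
    have := (mul_le_mul_iff_right₀ hcα0).mp (by linarith [h9] :
      cα * (g (t • α) + r - g Z / 2) ≤ cα * g (t • α - Z))
    exact this
  linarith [hg0 Z]
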